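/- arXiv:1208.4867 — 2 statements merged into one kernel-verified Lean document; each statement's English description precedes it below -/
import Mathlib

section
/- Suppose G(V,E) satisfies the sufficient condition for parameter f, F is the set of faulty nodes with |F| ≤ f, and consider an execution of the Middle algorithm. Suppose at the end of iteration s the fault-free nodes V∖F are partitioned into nonempty sets R and L such that R propagates to L in l steps. Let x = min_{j∈R} v_j[s]. Then for every fault-free node i ∈ V∖F: v_i[s+l] − μ[s] ≥ α^l·(x − μ[s]). -/
open Finset Filter

variable {V : Type} [Fintype V] [DecidableEq V]

/-- Incoming neighbors of node `v` in the directed graph with edge set `E`. -/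
def NinSet (E : Finset (V × V)) (v : V) : Finset V :=
  Finset.univ.filter (fun u => (u, v) ∈ E)

/-- `A ⇒ B`: there is a node in `B` with more than 1/3 of its incoming neighbors in `A`. -/
def ImpRel (E : Finset (V × V)) (A B : Finset V) : Prop :=
  ∃ v ∈ B, (NinSet E v).card < 3 * ((NinSet E v) ∩ A).card

/-- `in(A ⇒ B)`: the set of nodes in `B` with more than 1/3 of incoming neighbors in `A`. -/
def inRel (E : Finset (V × V)) (A B : Finset V) : Finset V :=
  B.filter (fun v => (NinSet E v).card < 3 * ((NinSet E v) ∩ A).card)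

/-- `A` propagates to `B` in `l` steps. -/
def PropagatesIn (E : Finset (V × V)) (A B : Finset V) (l : ℕ) : Prop :=
  0 < l ∧ ∃ As Bs : ℕ → Finset V,
    As 0 = A ∧ Bs 0 = B ∧ As l = A ∪ B ∧ Bs l = ∅ ∧
    (∀ τ < l, Bs τ ≠ ∅) ∧
    (∀ τ < l, ImpRel E (As τ) (Bs τ) ∧
      As (τ + 1) = As τ ∪ inRel E (As τ) (Bs τ) ∧
      Bs (τ + 1) = Bs τ \ inRel E (As τ) (Bs τ))

/-- `A` propagates to `B` (in some number of steps). -/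
def Propagates (E : Finset (V × V)) (A B : Finset V) : Prop :=
  ∃ l, PropagatesIn E A B l

/-- The sufficient condition for parameter `f`. -/
def SuffCond (E : Finset (V × V)) (f : ℕ) : Prop :=
  (∀ v : V, 3 * f ≤ (NinSet E v).card) ∧
  (∀ F L C R : Finset V,
    F ∪ L ∪ C ∪ R = Finset.univ →
    Disjoint F L → Disjoint F C → Disjoint F R →
    Disjoint L C → Disjoint L R → Disjoint C R →
    L.Nonempty → R.Nonempty → F.card ≤ f →
    ImpRel E (C ∪ R) L ∨ ImpRel E (L ∪ C) R)

/-- The weight `a_i = 1/(|N_i^-| - 2⌊|N_i^-|/3⌋ + 1)` used in the Middle algorithm. -/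
noncomputable def middleWeight (E : Finset (V × V)) (i : V) : ℝ :=
  (((NinSet E i).card - 2 * ((NinSet E i).card / 3) + 1 : ℕ) : ℝ)⁻¹

/-- `α = min_{i ∈ V} a_i`. -/
noncomputable def alphaMin (E : Finset (V × V)) : ℝ :=
  ⨅ i : V, middleWeight E i

/-- An execution of the Middle algorithm on graph `E` with faulty set `F`. -/
structure MiddleExec (E : Finset (V × V)) (F : Finset V) where
  /-- `state i t` is the state `v_i[t]` (meaningful for fault-free `i`). -/
  state : V → ℕ → ℝ
  /-- `w t i j` is the value node `i` receives from `j ∈ N_i^-` in iteration `t ≥ 1`. -/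
  w : ℕ → V → V → ℝ
  /-- the set `B` at node `i` in iteration `t`. -/
  Bs : ℕ → V → Finset V
  /-- the set `T` at node `i` in iteration `t`. -/
  Ts : ℕ → V → Finset V
  /-- the set `M` at node `i` in iteration `t`. -/
  Ms : ℕ → V → Finset V
  w_honest : ∀ t, 1 ≤ t → ∀ i, i ∉ F → ∀ j ∈ NinSet E i, j ∉ F →
    w t i j = state j (t - 1)
  part_union : ∀ t, 1 ≤ t → ∀ i, i ∉ F → Bs t i ∪ Ts t i ∪ Ms t i = NinSet E i
  disj_BT : ∀ t, 1 ≤ t → ∀ i, i ∉ F → Disjoint (Bs t i) (Ts t i)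
  disj_BM : ∀ t, 1 ≤ t → ∀ i, i ∉ F → Disjoint (Bs t i) (Ms t i)
  disj_TM : ∀ t, 1 ≤ t → ∀ i, i ∉ F → Disjoint (Ts t i) (Ms t i)
  card_B : ∀ t, 1 ≤ t → ∀ i, i ∉ F → (Bs t i).card = (NinSet E i).card / 3
  card_T : ∀ t, 1 ≤ t → ∀ i, i ∉ F → (Ts t i).card = (NinSet E i).card / 3
  le_BM : ∀ t, 1 ≤ t → ∀ i, i ∉ F → ∀ j ∈ Bs t i, ∀ k ∈ Ms t i, w t i j ≤ w t i k
  le_MT : ∀ t, 1 ≤ t → ∀ i, i ∉ F → ∀ j ∈ Ms t i, ∀ k ∈ Ts t i, w t i j ≤ w t i k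
  update : ∀ t, 1 ≤ t → ∀ i, i ∉ F →
    state i t = middleWeight E i * (state i (t - 1) + ∑ j ∈ Ms t i, w t i j)

/-- `U[t]`: the maximum state among fault-free nodes at the end of iteration `t`. -/
noncomputable def Umax {E : Finset (V × V)} {F : Finset V}
    (exec : MiddleExec E F) (t : ℕ) : ℝ :=
  ⨆ i : {i : V // i ∉ F}, exec.state i.1 t

/-- `μ[t]`: the minimum state among fault-free nodes at the end of iteration `t`. -/
noncomputable def muMin {E : Finset (V × V)} {F : Finset V}
    (exec : MiddleExec E F) (t : ℕ) : ℝ :=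
  ⨅ i : {i : V // i ∉ F}, exec.state i.1 t

/-- Every value received from an `M`-node is at least any global lower bound on
fault-free states at the previous iteration. -/
lemma Mval_lb {E : Finset (V × V)} {F : Finset V} (exec : MiddleExec E F)
    {f : ℕ} (hdeg : ∀ v : V, 3 * f ≤ (NinSet E v).card) (hF : F.card ≤ f)
    {t : ℕ} (ht : 1 ≤ t) {i : V} (hi : i ∉ F) {m : ℝ}
    (hm : ∀ j, j ∉ F → m ≤ exec.state j (t - 1)) :
    ∀ k ∈ exec.Ms t i, m ≤ exec.w t i k := by
  intro k hk
  have hMN : exec.Ms t i ⊆ NinSet E i := by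
    rw [← exec.part_union t ht i hi]; intro x hx
    simp [Finset.mem_union, hx]
  have hBN : exec.Bs t i ⊆ NinSet E i := by
    rw [← exec.part_union t ht i hi]; intro x hx
    simp [Finset.mem_union, hx]
  have hkB : k ∉ exec.Bs t i := fun h =>
    (Finset.disjoint_left.mp (exec.disj_BM t ht i hi)) h hk
  set S : Finset V := insert k (exec.Bs t i) with hS
  have hcardS : S.card = (NinSet E i).card / 3 + 1 := by
    rw [hS, Finset.card_insert_of_notMem hkB, exec.card_B t ht i hi]
  have hfle : f ≤ (NinSet E i).card / 3 :=
    (Nat.le_div_iff_mul_le (by norm_num)).mpr (by linarith [hdeg i])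
  have hex : ∃ j ∈ S, j ∉ F := by
    by_contra h
    push_neg at h
    have : S ⊆ F := fun x hx => h x hx
    have := Finset.card_le_card this
    omega
  obtain ⟨j, hjS, hjF⟩ := hex
  rcases Finset.mem_insert.mp hjS with rfl | hjB
  · rw [exec.w_honest t ht i hi j (hMN hk) hjF]
    exact hm j hjF
  · have h1 : exec.w t i j ≤ exec.w t i k := exec.le_BM t ht i hi j hjB k hk
    have h2 : exec.w t i j = exec.state j (t - 1) :=
      exec.w_honest t ht i hi j (hBN hjB) hjF
    have := hm j hjF
    linarith

/-- The cardinality of `M` in terms of the in-degree. -/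
lemma Ms_card {E : Finset (V × V)} {F : Finset V} (exec : MiddleExec E F)
    {t : ℕ} (ht : 1 ≤ t) {i : V} (hi : i ∉ F) :
    (exec.Ms t i).card = (NinSet E i).card - 2 * ((NinSet E i).card / 3) := by
  have hu := exec.part_union t ht i hi
  have hd1 := exec.disj_BT t ht i hi
  have hd2 := exec.disj_BM t ht i hi
  have hd3 := exec.disj_TM t ht i hi
  have hdu : Disjoint (exec.Bs t i ∪ exec.Ts t i) (exec.Ms t i) :=
    Finset.disjoint_union_left.mpr ⟨hd2, hd3⟩
  have hcard : (NinSet E i).card =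
      (exec.Bs t i).card + (exec.Ts t i).card + (exec.Ms t i).card := by
    rw [← hu, Finset.card_union_of_disjoint hdu, Finset.card_union_of_disjoint hd1]
  have hB := exec.card_B t ht i hi
  have hT := exec.card_T t ht i hi
  omega

/-- One-step lower bound: if all fault-free states at `t-1` are at least `m`, and either
node `i`'s own previous state or some received `M`-value is at least `m + e`, then
`i`'s new state is at least `m + a_i * e`. -/
lemma step_lb {E : Finset (V × V)} {F : Finset V} (exec : MiddleExec E F)
    {f : ℕ} (hdeg : ∀ v : V, 3 * f ≤ (NinSet E v).card) (hF : F.card ≤ f)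
    {t : ℕ} (ht : 1 ≤ t) {i : V} (hi : i ∉ F) {m e : ℝ}
    (hm : ∀ j, j ∉ F → m ≤ exec.state j (t - 1))
    (hgood : m + e ≤ exec.state i (t - 1) ∨
      ∃ k ∈ exec.Ms t i, m + e ≤ exec.w t i k) :
    m + middleWeight E i * e ≤ exec.state i t := by
  have hMcard := Ms_card exec ht hi
  set c : ℕ := (NinSet E i).card - 2 * ((NinSet E i).card / 3) + 1 with hc
  have hcM : c = (exec.Ms t i).card + 1 := by omega
  have hcpos : (0 : ℝ) < (c : ℝ) := by
    have : 1 ≤ c := by omega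
    exact_mod_cast Nat.lt_of_lt_of_le Nat.zero_lt_one this
  have hwlb : ∀ k ∈ exec.Ms t i, m ≤ exec.w t i k := Mval_lb exec hdeg hF ht hi hm
  have hkey : (c : ℝ) * m + e ≤ exec.state i (t - 1) + ∑ j ∈ exec.Ms t i, exec.w t i j := by
    rcases hgood with hself | ⟨k, hk, hke⟩
    · have hsum : ((exec.Ms t i).card : ℝ) * m ≤ ∑ j ∈ exec.Ms t i, exec.w t i j := by
        have := Finset.card_nsmul_le_sum (exec.Ms t i) (exec.w t i) m hwlb
        simpa [nsmul_eq_mul] using this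
      have : ((c : ℕ) : ℝ) = ((exec.Ms t i).card : ℝ) + 1 := by exact_mod_cast hcM
      rw [this]; linarith
    · have hsplit : ∑ j ∈ exec.Ms t i, exec.w t i j =
          exec.w t i k + ∑ j ∈ (exec.Ms t i).erase k, exec.w t i j :=
        (Finset.add_sum_erase _ _ hk).symm
      have hsum : (((exec.Ms t i).erase k).card : ℝ) * m ≤
          ∑ j ∈ (exec.Ms t i).erase k, exec.w t i j := by
        have := Finset.card_nsmul_le_sum ((exec.Ms t i).erase k) (exec.w t i) m
          (fun j hj => hwlb j (Finset.mem_of_mem_erase hj))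
        simpa [nsmul_eq_mul] using this
      have hself : m ≤ exec.state i (t - 1) := hm i hi
      have hcardE : ((exec.Ms t i).erase k).card = (exec.Ms t i).card - 1 :=
        Finset.card_erase_of_mem hk
      have hpos : 1 ≤ (exec.Ms t i).card := Finset.card_pos.mpr ⟨k, hk⟩
      have hcE : ((((exec.Ms t i).erase k).card : ℕ) : ℝ) + 2 = (c : ℝ) := by
        rw [hcardE]
        have : (exec.Ms t i).card - 1 + 2 = c := by omega
        exact_mod_cast congrArg (Nat.cast : ℕ → ℝ) this
      rw [hsplit]
      have hcm : (c : ℝ) * m = (((exec.Ms t i).erase k).card : ℝ) * m + 2 * m := by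
        rw [← hcE]; ring
      linarith
  have hupd := exec.update t ht i hi
  have hmw : middleWeight E i = ((c : ℕ) : ℝ)⁻¹ := by rw [middleWeight, hc]
  rw [hupd, hmw]
  have hmul := mul_le_mul_of_nonneg_left hkey (inv_nonneg.mpr hcpos.le)
  have hinv : ((c : ℕ) : ℝ)⁻¹ * ((c : ℝ) * m + e) = m + ((c : ℕ) : ℝ)⁻¹ * e := by
    field_simp
  linarith [hmul, hinv ▸ hmul]

/-- Monotonicity of the global lower bound. -/
lemma mono_lb {E : Finset (V × V)} {F : Finset V} (exec : MiddleExec E F)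
    {f : ℕ} (hdeg : ∀ v : V, 3 * f ≤ (NinSet E v).card) (hF : F.card ≤ f)
    {s : ℕ} {m : ℝ} (hm : ∀ j, j ∉ F → m ≤ exec.state j s) :
    ∀ τ, ∀ j, j ∉ F → m ≤ exec.state j (s + τ) := by
  intro τ
  induction τ with
  | zero => simpa using hm
  | succ τ ih =>
    intro j hj
    have ht : 1 ≤ s + τ + 1 := by omega
    have hprev : ∀ k, k ∉ F → m ≤ exec.state k (s + τ + 1 - 1) := by
      simpa using ih
    have := step_lb exec hdeg hF ht hj hprev (e := 0) (Or.inl (by simpa using hprev j hj))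
    simpa [Nat.add_assoc] using this

/-- Claim 2, lower bound for all fault-free nodes after `l` iterations. -/
theorem all_nodes_lower_bound
    (E : Finset (V × V)) (f : ℕ)
    (hn : 2 ≤ Fintype.card V)
    (hloop : ∀ v : V, (v, v) ∉ E)
    (hsuff : SuffCond E f)
    (F : Finset V) (hF : F.card ≤ f)
    (exec : MiddleExec E F)
    (s l : ℕ) (R L : Finset V)
    (hpart : R ∪ L = Finset.univ \ F) (hdisj : Disjoint R L)
    (hRne : R.Nonempty) (hLne : L.Nonempty)
    (hprop : PropagatesIn E R L l) :
    ∀ i : V, i ∉ F →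
      exec.state i (s + l) - muMin exec s ≥
        alphaMin E ^ l * ((⨅ j : {j : V // j ∈ R}, exec.state j.1 s) - muMin exec s) := by
  intro i hi
  obtain ⟨hl, As, Bs, hA0, hB0, hAl, hBl, hBneτ, hstep⟩ := hprop
  have hdeg := hsuff.1
  have hfree : ∀ j, j ∈ R ∪ L → j ∉ F := by
    intro j hj
    have : j ∈ Finset.univ \ F := hpart ▸ hj
    exact (Finset.mem_sdiff.mp this).2
  -- invariant: As τ stays inside R ∪ L and Bs τ inside L
  have hinv : ∀ τ, τ ≤ l → As τ ⊆ R ∪ L ∧ Bs τ ⊆ L := by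
    intro τ
    induction τ with
    | zero =>
      intro _
      exact ⟨hA0 ▸ Finset.subset_union_left, hB0 ▸ Finset.Subset.refl L⟩
    | succ τ ih =>
      intro hτl
      have hτ : τ < l := hτl
      obtain ⟨ihA, ihB⟩ := ih hτ.le
      obtain ⟨_, hAs, hBs⟩ := hstep τ hτ
      constructor
      · rw [hAs]
        apply Finset.union_subset ihA
        exact fun x hx => Finset.mem_union_right _ (ihB (Finset.filter_subset _ _ hx))
      · rw [hBs]
        exact fun x hx => ihB (Finset.mem_sdiff.mp hx).1
  haveI : Nonempty {i : V // i ∉ F} := by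
    obtain ⟨r, hr⟩ := hRne
    exact ⟨⟨r, hfree r (Finset.mem_union_left _ hr)⟩⟩
  haveI : Nonempty {j : V // j ∈ R} := by
    obtain ⟨r, hr⟩ := hRne
    exact ⟨⟨r, hr⟩⟩
  haveI : Nonempty V := Fintype.card_pos_iff.mp (by omega)
  set m : ℝ := muMin exec s with hmdef
  set x : ℝ := ⨅ j : {j : V // j ∈ R}, exec.state j.1 s with hxdef
  have hm : ∀ j, j ∉ F → m ≤ exec.state j s := by
    intro j hj
    exact ciInf_le (Finite.bddBelow_range _) (⟨j, hj⟩ : {i : V // i ∉ F})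
  have hx : ∀ j, j ∈ R → x ≤ exec.state j s := by
    intro j hj
    exact ciInf_le (Finite.bddBelow_range _) (⟨j, hj⟩ : {j : V // j ∈ R})
  have hmx : m ≤ x :=
    le_ciInf fun j => hm j.1 (hfree j.1 (Finset.mem_union_left _ j.2))
  have hα0 : 0 ≤ alphaMin E :=
    le_ciInf fun v => inv_nonneg.mpr (Nat.cast_nonneg _)
  have hαle : ∀ v : V, alphaMin E ≤ middleWeight E v := fun v =>
    ciInf_le (Finite.bddBelow_range _) v
  -- main claim by induction
  have claim : ∀ τ, τ ≤ l → ∀ j ∈ As τ,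
      m + alphaMin E ^ τ * (x - m) ≤ exec.state j (s + τ) := by
    intro τ
    induction τ with
    | zero =>
      intro _ j hj
      rw [hA0] at hj
      have := hx j hj
      simpa using (by linarith : m + 1 * (x - m) ≤ exec.state j s)
    | succ τ ih =>
      intro hτl j hj
      have hτ : τ < l := hτl
      obtain ⟨_, hAs, hBs⟩ := hstep τ hτ
      rw [hAs] at hj
      have ht : 1 ≤ s + τ + 1 := by omega
      have hm' : ∀ k, k ∉ F → m ≤ exec.state k (s + τ + 1 - 1) := by
        simpa using mono_lb exec hdeg hF hm τ
      have hαstep : ∀ jj : V, 0 ≤ (x - m) →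
          alphaMin E ^ (τ + 1) * (x - m) ≤
            middleWeight E jj * (alphaMin E ^ τ * (x - m)) := by
        intro jj hxm
        have h3 : 0 ≤ alphaMin E ^ τ * (x - m) :=
          mul_nonneg (pow_nonneg hα0 _) hxm
        calc alphaMin E ^ (τ + 1) * (x - m)
            = alphaMin E * (alphaMin E ^ τ * (x - m)) := by ring
          _ ≤ middleWeight E jj * (alphaMin E ^ τ * (x - m)) :=
              mul_le_mul_of_nonneg_right (hαle jj) h3
      rcases Finset.mem_union.mp hj with hjA | hjI
      · have hjF : j ∉ F := hfree j ((hinv τ hτ.le).1 hjA)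
        have hstep' := step_lb exec hdeg hF ht hjF hm'
          (Or.inl (by simpa using ih hτ.le j hjA))
        have h2 := hαstep j (by linarith)
        show m + alphaMin E ^ (τ + 1) * (x - m) ≤ exec.state j (s + τ + 1)
        linarith
      · have hjB : j ∈ Bs τ := (Finset.mem_filter.mp hjI).1
        have hjF : j ∉ F := hfree j (Finset.mem_union_right _ ((hinv τ hτ.le).2 hjB))
        have hcard : (NinSet E j).card < 3 * ((NinSet E j) ∩ As τ).card :=
          (Finset.mem_filter.mp hjI).2
        have hT := exec.card_T (s + τ + 1) ht j hjF
        have hnotsub : ¬ ((NinSet E j) ∩ As τ ⊆ exec.Ts (s + τ + 1) j) := by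
          intro hsub
          have h1 := Finset.card_le_card hsub
          have h2 : ((NinSet E j) ∩ As τ).card ≤ (NinSet E j).card :=
            Finset.card_le_card Finset.inter_subset_left
          omega
        obtain ⟨k0, hk0, hk0T⟩ := Finset.not_subset.mp hnotsub
        have hk0N : k0 ∈ NinSet E j := (Finset.mem_inter.mp hk0).1
        have hk0A : k0 ∈ As τ := (Finset.mem_inter.mp hk0).2
        have hk0F : k0 ∉ F := hfree k0 ((hinv τ hτ.le).1 hk0A)
        have hw0 : exec.w (s + τ + 1) j k0 = exec.state k0 (s + τ) := by
          rw [exec.w_honest (s + τ + 1) ht j hjF k0 hk0N hk0F]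
          simp
        have hbig := ih hτ.le k0 hk0A
        have hk0BM : k0 ∈ exec.Bs (s + τ + 1) j ∪ exec.Ms (s + τ + 1) j := by
          have h1 : k0 ∈ exec.Bs (s + τ + 1) j ∪ exec.Ts (s + τ + 1) j ∪
              exec.Ms (s + τ + 1) j := (exec.part_union (s + τ + 1) ht j hjF) ▸ hk0N
          rcases Finset.mem_union.mp h1 with h2 | h2
          · rcases Finset.mem_union.mp h2 with h3 | h3
            · exact Finset.mem_union_left _ h3
            · exact absurd h3 hk0T
          · exact Finset.mem_union_right _ h2
        have hgood : ∃ k ∈ exec.Ms (s + τ + 1) j,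
            m + alphaMin E ^ τ * (x - m) ≤ exec.w (s + τ + 1) j k := by
          rcases Finset.mem_union.mp hk0BM with hB | hM
          · have hMcard := Ms_card exec ht hjF
            have hNpos : 1 ≤ (NinSet E j).card := Finset.card_pos.mpr ⟨k0, hk0N⟩
            have hMpos : 0 < (exec.Ms (s + τ + 1) j).card := by omega
            obtain ⟨k, hk⟩ := Finset.card_pos.mp hMpos
            refine ⟨k, hk, ?_⟩
            have hle := exec.le_BM (s + τ + 1) ht j hjF k0 hB k hk
            rw [hw0] at hle
            linarith
          · exact ⟨k0, hM, by rw [hw0]; exact hbig⟩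
        have hstep' := step_lb exec hdeg hF ht hjF hm' (Or.inr hgood)
        have h2 := hαstep j (by linarith)
        show m + alphaMin E ^ (τ + 1) * (x - m) ≤ exec.state j (s + τ + 1)
        linarith
  have hiRL : i ∈ As l := by
    rw [hAl, hpart]
    exact Finset.mem_sdiff.mpr ⟨Finset.mem_univ i, hi⟩
  have := claim l le_rfl i hiRL
  linarith
end

section
/- Suppose G(V,E) satisfies the sufficient condition for parameter f, F is the set of faulty nodes with |F| ≤ f, and consider an execution of the Middle algorithm. Suppose at the end of iteration s the fault-free nodes V∖F are partitioned into nonempty sets R and L such that R propagates to L in l steps. Let X = max_{j∈R} v_j[s]. Then for every fault-free node i ∈ V∖F: U[s] − v_i[s+l] ≥ α^l·(U[s] − X). -/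
open Finset Filter

variable {V : Type} [Fintype V] [DecidableEq V]

lemma middleWeight_pos' (E : Finset (V × V)) (i : V) : 0 < middleWeight E i := by
  rw [middleWeight, inv_pos]
  exact_mod_cast Nat.succ_pos _

lemma alphaMin_le' [Nonempty V] (E : Finset (V × V)) (i : V) :
    alphaMin E ≤ middleWeight E i :=
  ciInf_le (Set.Finite.bddBelow (Set.finite_range _)) i

lemma alphaMin_pos' [Nonempty V] (E : Finset (V × V)) : 0 < alphaMin E := by
  obtain ⟨i0, hi0⟩ := Finite.exists_min (middleWeight E)
  exact lt_of_lt_of_le (middleWeight_pos' E i0) (le_ciInf hi0)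

lemma le_Umax' {E : Finset (V × V)} {F : Finset V} (exec : MiddleExec E F)
    (t : ℕ) (i : V) (hi : i ∉ F) : exec.state i t ≤ Umax exec t := by
  have h := le_ciSup (f := fun j : {i : V // i ∉ F} => exec.state j.1 t)
    (Set.Finite.bddAbove (Set.finite_range _)) ⟨i, hi⟩
  exact h

/-- Claim 3, upper bound for all fault-free nodes after `l` iterations. -/
theorem all_nodes_upper_bound
    (E : Finset (V × V)) (f : ℕ)
    (hn : 2 ≤ Fintype.card V)
    (hloop : ∀ v : V, (v, v) ∉ E)
    (hsuff : SuffCond E f)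
    (F : Finset V) (hF : F.card ≤ f)
    (exec : MiddleExec E F)
    (s l : ℕ) (R L : Finset V)
    (hpart : R ∪ L = Finset.univ \ F) (hdisj : Disjoint R L)
    (hRne : R.Nonempty) (hLne : L.Nonempty)
    (hprop : PropagatesIn E R L l) :
    ∀ i : V, i ∉ F →
      Umax exec s - exec.state i (s + l) ≥
        alphaMin E ^ l * (Umax exec s - (⨆ j : {j : V // j ∈ R}, exec.state j.1 s)) := by
  classical
  obtain ⟨r, hr⟩ := hRne
  have hff : ∀ j, j ∈ R ∪ L → j ∉ F := by
    intro j hj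
    rw [hpart] at hj
    exact (Finset.mem_sdiff.mp hj).2
  haveI : Nonempty V := ⟨r⟩
  set U := Umax exec s with hU
  set X := ⨆ j : {j : V // j ∈ R}, exec.state j.1 s with hX
  set α := alphaMin E with hα
  have hα0 : 0 < α := alphaMin_pos' E
  have hXU : X ≤ U := by
    haveI : Nonempty {j : V // j ∈ R} := ⟨⟨r, hr⟩⟩
    exact ciSup_le fun j => le_Umax' exec s j.1 (hff j.1 (Finset.mem_union_left _ j.2))
  have hδ : (0:ℝ) ≤ U - X := sub_nonneg.mpr hXU
  obtain ⟨hl, As, Bs, hA0, hB0, hAl, hBl, hBne, hstep⟩ := hprop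
  -- cardinality of the middle set
  have hMcard : ∀ t, 1 ≤ t → ∀ i, i ∉ F →
      (exec.Ms t i).card + 2 * ((NinSet E i).card / 3) = (NinSet E i).card := by
    intro t ht i hi
    have hpu := exec.part_union t ht i hi
    have hd : Disjoint (exec.Bs t i ∪ exec.Ts t i) (exec.Ms t i) :=
      Finset.disjoint_union_left.mpr ⟨exec.disj_BM t ht i hi, exec.disj_TM t ht i hi⟩
    have h1 : (exec.Bs t i ∪ exec.Ts t i ∪ exec.Ms t i).card =
        (exec.Bs t i).card + (exec.Ts t i).card + (exec.Ms t i).card := by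
      rw [Finset.card_union_of_disjoint hd, Finset.card_union_of_disjoint (exec.disj_BT t ht i hi)]
    rw [hpu] at h1
    rw [exec.card_B t ht i hi, exec.card_T t ht i hi] at h1
    omega
  have hMw : ∀ t, 1 ≤ t → ∀ i, i ∉ F →
      middleWeight E i = (((exec.Ms t i).card : ℝ) + 1)⁻¹ := by
    intro t ht i hi
    have hmc := hMcard t ht i hi
    rw [middleWeight]
    congr 1
    have : (NinSet E i).card - 2 * ((NinSet E i).card / 3) + 1 = (exec.Ms t i).card + 1 := by
      omega
    rw [this]
    push_cast
    ring
  -- the M-values of a fault-free node are bounded by any bound on fault-free states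
  have hMbound : ∀ t, 1 ≤ t → ∀ i, i ∉ F → ∀ K : ℝ,
      (∀ j, j ∉ F → exec.state j (t-1) ≤ K) →
      ∀ j ∈ exec.Ms t i, exec.w t i j ≤ K := by
    intro t ht i hi K hK j hj
    have hjN : j ∈ NinSet E i := by
      rw [← exec.part_union t ht i hi]
      exact Finset.mem_union_right _ hj
    by_cases hT : ∃ k ∈ exec.Ts t i, k ∉ F
    · obtain ⟨k, hk, hkF⟩ := hT
      have hkN : k ∈ NinSet E i := by
        rw [← exec.part_union t ht i hi]
        exact Finset.mem_union_left _ (Finset.mem_union_right _ hk)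
      calc exec.w t i j ≤ exec.w t i k := exec.le_MT t ht i hi j hj k hk
        _ = exec.state k (t-1) := exec.w_honest t ht i hi k hkN hkF
        _ ≤ K := hK k hkF
    · push_neg at hT
      have hjF : j ∉ F := by
        intro hjF
        have hjT : j ∉ exec.Ts t i := Finset.disjoint_right.mp (exec.disj_TM t ht i hi) hj
        have hsub : insert j (exec.Ts t i) ⊆ (NinSet E i) ∩ F := by
          intro x hx
          rcases Finset.mem_insert.mp hx with hx | hx
          · subst hx; exact Finset.mem_inter.mpr ⟨hjN, hjF⟩
          · refine Finset.mem_inter.mpr ⟨?_, hT x hx⟩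
            rw [← exec.part_union t ht i hi]
            exact Finset.mem_union_left _ (Finset.mem_union_right _ hx)
        have hcard : (exec.Ts t i).card + 1 ≤ ((NinSet E i) ∩ F).card := by
          calc (exec.Ts t i).card + 1 = (insert j (exec.Ts t i)).card :=
                (Finset.card_insert_of_notMem hjT).symm
            _ ≤ _ := Finset.card_le_card hsub
        have h1 : ((NinSet E i) ∩ F).card ≤ F.card :=
          Finset.card_le_card Finset.inter_subset_right
        have h2 := hsuff.1 i
        rw [exec.card_T t ht i hi] at hcard
        omega
      rw [exec.w_honest t ht i hi j hjN hjF]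
      exact hK j hjF
  -- the key one-step bound
  have keyC : ∀ t, 1 ≤ t → ∀ i, i ∉ F → ∀ z : ℝ,
      (∀ j ∈ exec.Ms t i, exec.w t i j ≤ U) →
      exec.state i (t-1) ≤ U → z ≤ U →
      (exec.state i (t-1) ≤ z ∨ ∃ j0 ∈ exec.Ms t i, exec.w t i j0 ≤ z) →
      exec.state i t ≤ U - middleWeight E i * (U - z) := by
    intro t ht i hi z hMU hpU hzU hcase
    have ha := hMw t ht i hi
    set m := (exec.Ms t i).card with hm
    have hm1 : (0:ℝ) < (m:ℝ) + 1 := by positivity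
    rw [exec.update t ht i hi, ha]
    have hgoal : exec.state i (t-1) + ∑ j ∈ exec.Ms t i, exec.w t i j ≤ z + (m:ℝ) * U := by
      rcases hcase with hz | ⟨j0, hj0, hwj0⟩
      · have hsum : ∑ j ∈ exec.Ms t i, exec.w t i j ≤ (m:ℝ) * U := by
          calc ∑ j ∈ exec.Ms t i, exec.w t i j ≤ ∑ _j ∈ exec.Ms t i, U :=
                Finset.sum_le_sum (fun j hj => hMU j hj)
            _ = (m:ℝ) * U := by rw [Finset.sum_const, nsmul_eq_mul]
        linarith
      · have hmpos : 1 ≤ m := Finset.one_le_card.mpr ⟨j0, hj0⟩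
        have hsplit : ∑ j ∈ exec.Ms t i, exec.w t i j =
            exec.w t i j0 + ∑ j ∈ (exec.Ms t i).erase j0, exec.w t i j :=
          (Finset.add_sum_erase _ _ hj0).symm
        have hsum2 : ∑ j ∈ (exec.Ms t i).erase j0, exec.w t i j ≤ ((m:ℝ) - 1) * U := by
          calc ∑ j ∈ (exec.Ms t i).erase j0, exec.w t i j
              ≤ ∑ _j ∈ (exec.Ms t i).erase j0, U :=
                Finset.sum_le_sum (fun j hj => hMU j (Finset.mem_of_mem_erase hj))
            _ = (((m - 1 : ℕ)):ℝ) * U := by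
                rw [Finset.sum_const, nsmul_eq_mul, Finset.card_erase_of_mem hj0]
            _ = ((m:ℝ) - 1) * U := by
                rw [Nat.cast_sub hmpos]; norm_num
        rw [hsplit]
        linarith
    calc ((m:ℝ) + 1)⁻¹ * (exec.state i (t-1) + ∑ j ∈ exec.Ms t i, exec.w t i j)
        ≤ ((m:ℝ) + 1)⁻¹ * (z + (m:ℝ) * U) := by
          exact mul_le_mul_of_nonneg_left hgoal (by positivity)
      _ = U - ((m:ℝ) + 1)⁻¹ * (U - z) := by field_simp; ring
  -- propagation sets stay inside R ∪ L
  have hAB : ∀ τ, τ ≤ l → As τ ⊆ R ∪ L ∧ Bs τ ⊆ L := by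
    intro τ
    induction τ with
    | zero =>
      intro _
      rw [hA0, hB0]
      exact ⟨Finset.subset_union_left, Finset.Subset.refl L⟩
    | succ τ ih =>
      intro hτ
      obtain ⟨ihA, ihB⟩ := ih (by omega)
      obtain ⟨_, hA', hB'⟩ := hstep τ (by omega)
      constructor
      · rw [hA']
        refine Finset.union_subset ihA ?_
        intro x hx
        rw [inRel, Finset.mem_filter] at hx
        exact Finset.mem_union_right _ (ihB hx.1)
      · rw [hB']
        exact Finset.Subset.trans (Finset.sdiff_subset) ihB
  -- main induction
  have main : ∀ τ, τ ≤ l →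
      (∀ i, i ∉ F → exec.state i (s+τ) ≤ U) ∧
      (∀ i ∈ As τ, U - exec.state i (s+τ) ≥ α^τ * (U - X)) := by
    intro τ
    induction τ with
    | zero =>
      intro _
      refine ⟨fun i hi => le_Umax' exec s i hi, ?_⟩
      rw [hA0]
      intro i hiR
      simp only [pow_zero, one_mul]
      haveI : Nonempty {j : V // j ∈ R} := ⟨⟨i, hiR⟩⟩
      have hx : exec.state i s ≤ X := by
        have h := le_ciSup (f := fun j : {j : V // j ∈ R} => exec.state j.1 s)
          (Set.Finite.bddAbove (Set.finite_range _)) ⟨i, hiR⟩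
        exact h
      show U - exec.state i s ≥ U - X
      linarith
    | succ τ ih =>
      intro hτ1
      obtain ⟨ihU, ihA⟩ := ih (by omega)
      have ht : 1 ≤ s + τ + 1 := by omega
      have htsub : (s + τ + 1) - 1 = s + τ := by omega
      have ihU' : ∀ j, j ∉ F → exec.state j ((s+τ+1)-1) ≤ U := by
        intro j hj; rw [htsub]; exact ihU j hj
      have hMU : ∀ i, i ∉ F → ∀ j ∈ exec.Ms (s+τ+1) i, exec.w (s+τ+1) i j ≤ U :=
        fun i hi => hMbound (s+τ+1) ht i hi U ihU'
      constructor
      · intro i hi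
        have hk := keyC (s+τ+1) ht i hi U (hMU i hi) (ihU' i hi) le_rfl (Or.inl (ihU' i hi))
        have : exec.state i (s+τ+1) ≤ U - middleWeight E i * (U - U) := hk
        simpa [Nat.add_assoc] using this
      · intro i hiA1
        have hpow : (0:ℝ) ≤ α^τ * (U - X) := mul_nonneg (pow_nonneg hα0.le τ) hδ
        set z := U - α^τ * (U - X) with hz
        have hzU : z ≤ U := by rw [hz]; linarith
        have hiRL : i ∈ R ∪ L := (hAB (τ+1) hτ1).1 hiA1
        have hiF : i ∉ F := hff i hiRL
        obtain ⟨_, hA', hB'⟩ := hstep τ (by omega)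
        have hcase : exec.state i ((s+τ+1)-1) ≤ z ∨
            ∃ j0 ∈ exec.Ms (s+τ+1) i, exec.w (s+τ+1) i j0 ≤ z := by
          rw [htsub]
          rw [hA'] at hiA1
          rcases Finset.mem_union.mp hiA1 with hiA | hiIn
          · left
            have := ihA i hiA
            rw [hz]; linarith
          · right
            rw [inRel, Finset.mem_filter] at hiIn
            obtain ⟨hiB, hcard⟩ := hiIn
            have hBcard : (exec.Bs (s+τ+1) i).card = (NinSet E i).card / 3 :=
              exec.card_B _ ht i hiF
            have hinterle : ((NinSet E i) ∩ As τ).card ≤ (NinSet E i).card :=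
              Finset.card_le_card Finset.inter_subset_left
            have hnotsub : ¬ ((NinSet E i) ∩ As τ ⊆ exec.Bs (s+τ+1) i) := by
              intro hsub
              have := Finset.card_le_card hsub
              omega
            obtain ⟨jstar, hjsmem, hjsB⟩ := Finset.not_subset.mp hnotsub
            have hjsN : jstar ∈ NinSet E i := (Finset.mem_inter.mp hjsmem).1
            have hjsA : jstar ∈ As τ := (Finset.mem_inter.mp hjsmem).2
            have hjsF : jstar ∉ F := hff jstar ((hAB τ (by omega)).1 hjsA)
            have hjsz : exec.state jstar (s+τ) ≤ z := by
              have := ihA jstar hjsA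
              rw [hz]; linarith
            have hjsBTM : jstar ∈ exec.Bs (s+τ+1) i ∪ exec.Ts (s+τ+1) i ∪ exec.Ms (s+τ+1) i := by
              rw [exec.part_union _ ht i hiF]; exact hjsN
            rcases Finset.mem_union.mp hjsBTM with h1 | hM
            · rcases Finset.mem_union.mp h1 with hB | hT
              · exact absurd hB hjsB
              · have hMne : (exec.Ms (s+τ+1) i).Nonempty := by
                  rw [← Finset.card_pos]
                  have hMc := hMcard (s+τ+1) ht i hiF
                  omega
                obtain ⟨j0, hj0⟩ := hMne
                refine ⟨j0, hj0, ?_⟩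
                calc exec.w (s+τ+1) i j0 ≤ exec.w (s+τ+1) i jstar :=
                      exec.le_MT _ ht i hiF j0 hj0 jstar hT
                  _ = exec.state jstar (s+τ) := by
                      rw [exec.w_honest _ ht i hiF jstar hjsN hjsF, htsub]
                  _ ≤ z := hjsz
            · refine ⟨jstar, hM, ?_⟩
              rw [exec.w_honest _ ht i hiF jstar hjsN hjsF, htsub]
              exact hjsz
        have hkey := keyC (s+τ+1) ht i hiF z (hMU i hiF) (ihU' i hiF) hzU hcase
        have haα : α ≤ middleWeight E i := alphaMin_le' E i
        have hUz : U - z = α^τ * (U - X) := by rw [hz]; ring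
        have h1 : middleWeight E i * (U - z) ≥ α * (α^τ * (U - X)) := by
          rw [hUz]
          exact mul_le_mul_of_nonneg_right haα hpow
        have hps : α^(τ+1) * (U - X) = α * (α^τ * (U - X)) := by ring
        show U - exec.state i (s+(τ+1)) ≥ α^(τ+1) * (U - X)
        have hst : s + (τ+1) = s + τ + 1 := by omega
        rw [hst, hps]
        linarith
  intro i hi
  have hiAl : i ∈ As l := by
    rw [hAl, hpart, Finset.mem_sdiff]
    exact ⟨Finset.mem_univ i, hi⟩
  exact (main l le_rfl).2 i hiAl
end
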